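/- Let q ∈ (0,1), λ > 0, and let x : [0,∞) → ℝ be the solution of x'(t) = λ x(qt) with x(0) = x₀ > 0. Then the ratio t ↦ x(t)/x(qt) is monotone increasing on (0,∞) and tends to +∞ as t → ∞. -/

import Mathlib

open Set Filter Topology

/-- If `f` has (two-sided) derivative `d` at `c > 0` and `f c ≤ f t` for all `t ∈ (0, c)`,
then `d ≤ 0`. -/
lemma deriv_nonpos_of_left_min {f : ℝ → ℝ} {d c : ℝ} (hc : 0 < c)
    (hf : HasDerivAt f d c) (h : ∀ t, 0 < t → t < c → f c ≤ f t) : d ≤ 0 := by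
  have h1 : Tendsto (slope f c) (𝓝[≠] c) (𝓝 d) := hasDerivAt_iff_tendsto_slope.mp hf
  have h2 : Tendsto (slope f c) (𝓝[<] c) (𝓝 d) :=
    h1.mono_left (nhdsWithin_mono c fun y hy => ne_of_lt hy)
  refine le_of_tendsto h2 ?_
  filter_upwards [Ioo_mem_nhdsLT hc] with t ht
  have hle : f c ≤ f t := h t ht.1 ht.2
  rw [slope_def_field]
  apply div_nonpos_of_nonneg_of_nonpos <;> linarith [ht.2]

section Pantograph

variable {q l x₀ : ℝ} {x : ℝ → ℝ}

lemma pan_pos (hq : 0 < q) (hq1 : q < 1) (hl : 0 < l) (hx₀ : 0 < x₀)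
    (h0 : x 0 = x₀) (heq : ∀ t, 0 ≤ t → HasDerivAt x (l * x (q * t)) t) :
    ∀ t, 0 ≤ t → 0 < x t := by
  by_contra hcon
  push_neg at hcon
  obtain ⟨T, hT0, hT⟩ := hcon
  set S : Set ℝ := {t | 0 ≤ t ∧ x t ≤ 0} with hS
  have hSne : S.Nonempty := ⟨T, hT0, hT⟩
  have hSbd : BddBelow S := ⟨0, fun t ht => ht.1⟩
  set c := sInf S with hc
  have hc0 : 0 ≤ c := le_csInf hSne fun t ht => ht.1
  have hxc : x c ≤ 0 := by
    obtain ⟨u, hu1, hu2⟩ := mem_closure_iff_seq_limit.mp (csInf_mem_closure hSne hSbd)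
    exact le_of_tendsto (((heq c hc0).continuousAt.tendsto).comp hu2)
      (Eventually.of_forall fun n => (hu1 n).2)
  have hcpos : 0 < c := by
    rcases hc0.lt_or_eq with h | h
    · exact h
    · rw [← h, h0] at hxc; linarith
  have hlt : ∀ t, 0 ≤ t → t < c → 0 < x t := by
    intro t ht htc
    by_contra hx
    push_neg at hx
    exact absurd (csInf_le hSbd ⟨ht, hx⟩) (not_le.mpr htc)
  have hmono : StrictMonoOn x (Icc 0 c) := by
    apply strictMonoOn_of_deriv_pos (convex_Icc 0 c)
    · intro s hs; exact (heq s hs.1).continuousAt.continuousWithinAt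
    · intro s hs
      rw [interior_Icc] at hs
      rw [(heq s hs.1.le).deriv]
      have h1 : q * s < c := by nlinarith [hs.1, hs.2]
      have h2 : 0 < x (q * s) := hlt _ (mul_nonneg hq.le hs.1.le) h1
      positivity
  have := hmono (left_mem_Icc.mpr hc0) (right_mem_Icc.mpr hc0) hcpos
  rw [h0] at this
  linarith

end Pantograph

section Pantograph2

variable {q l x₀ : ℝ} {x : ℝ → ℝ}

lemma pan_mono (hq : 0 < q) (hq1 : q < 1) (hl : 0 < l) (hx₀ : 0 < x₀)
    (h0 : x 0 = x₀) (heq : ∀ t, 0 ≤ t → HasDerivAt x (l * x (q * t)) t) :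
    StrictMonoOn x (Ici 0) := by
  apply strictMonoOn_of_deriv_pos (convex_Ici 0)
  · intro s hs; exact (heq s hs).continuousAt.continuousWithinAt
  · intro s hs
    rw [interior_Ici] at hs
    rw [(heq s (le_of_lt hs)).deriv]
    have h2 : 0 < x (q * s) :=
      pan_pos hq hq1 hl hx₀ h0 heq _ (mul_nonneg hq.le hs.le)
    positivity

lemma pan_hasDerivAt_scaled (hq : 0 < q)
    (heq : ∀ t, 0 ≤ t → HasDerivAt x (l * x (q * t)) t) {t : ℝ} (ht : 0 ≤ t) :
    HasDerivAt (fun s => x (q * s)) (q * (l * x (q * (q * t)))) t := by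
  have h1 : HasDerivAt (fun s : ℝ => q * s) (q * 1) t := (hasDerivAt_id t).const_mul q
  have := (heq (q * t) (mul_nonneg hq.le ht)).comp t h1
  exact this.congr_deriv (by ring)

lemma pan_hasDerivAt_scaled2 (hq : 0 < q)
    (heq : ∀ t, 0 ≤ t → HasDerivAt x (l * x (q * t)) t) {t : ℝ} (ht : 0 ≤ t) :
    HasDerivAt (fun s => x (q * (q * s))) (q * q * (l * x (q * (q * (q * t))))) t := by
  have h1 : HasDerivAt (fun s : ℝ => q * s) (q * 1) t := (hasDerivAt_id t).const_mul q
  have h2 : HasDerivAt (fun s : ℝ => q * (q * s)) (q * (q * 1)) t := h1.const_mul q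
  have h3 := (heq (q * (q * t)) (by positivity)).comp t h2
  exact h3.congr_deriv (by ring)

lemma pan_D_hasDeriv (hq : 0 < q)
    (heq : ∀ t, 0 ≤ t → HasDerivAt x (l * x (q * t)) t) {t : ℝ} (ht : 0 ≤ t) :
    HasDerivAt (fun s => x (q * s) ^ 2 - q * (x s * x (q * (q * s))))
      (q * l * (x (q * t) * x (q * (q * t)) - q * q * (x t * x (q * (q * (q * t)))))) t := by
  have hA := (pan_hasDerivAt_scaled hq heq ht).pow 2
  have hB := (heq t ht).mul (pan_hasDerivAt_scaled2 hq heq ht)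
  have hC := hA.sub (hB.const_mul q)
  exact hC.congr_deriv (by push_cast; ring)

end Pantograph2

section Pantograph3

variable {q l x₀ : ℝ} {x : ℝ → ℝ}

lemma pan_D_pos (hq : 0 < q) (hq1 : q < 1) (hl : 0 < l) (hx₀ : 0 < x₀)
    (h0 : x 0 = x₀) (heq : ∀ t, 0 ≤ t → HasDerivAt x (l * x (q * t)) t) :
    ∀ t, 0 ≤ t → q * (x t * x (q * (q * t))) < x (q * t) ^ 2 := by
  have hpos := pan_pos hq hq1 hl hx₀ h0 heq
  set D : ℝ → ℝ := fun s => x (q * s) ^ 2 - q * (x s * x (q * (q * s))) with hD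
  suffices h : ∀ t, 0 ≤ t → 0 < D t by
    intro t ht; have := h t ht; simp only [hD] at this; linarith
  by_contra hcon
  push_neg at hcon
  obtain ⟨T, hT0, hT⟩ := hcon
  set S : Set ℝ := {t | 0 ≤ t ∧ D t ≤ 0} with hS
  have hSne : S.Nonempty := ⟨T, hT0, hT⟩
  have hSbd : BddBelow S := ⟨0, fun t ht => ht.1⟩
  set c := sInf S with hc
  have hc0 : 0 ≤ c := le_csInf hSne fun t ht => ht.1
  have hDc : D c ≤ 0 := by
    obtain ⟨u, hu1, hu2⟩ := mem_closure_iff_seq_limit.mp (csInf_mem_closure hSne hSbd)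
    exact le_of_tendsto
      (((pan_D_hasDeriv hq heq hc0).continuousAt.tendsto).comp hu2)
      (Eventually.of_forall fun n => (hu1 n).2)
  have hD0 : 0 < D 0 := by
    simp only [hD, mul_zero, h0]
    nlinarith [mul_pos hx₀ hx₀, sub_pos.mpr hq1]
  have hcpos : 0 < c := by
    rcases hc0.lt_or_eq with h | h
    · exact h
    · rw [← h] at hDc; linarith
  have hlt : ∀ t, 0 ≤ t → t < c → 0 < D t := by
    intro t ht htc
    by_contra hx
    push_neg at hx
    exact absurd (csInf_le hSbd ⟨ht, hx⟩) (not_le.mpr htc)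
  -- the value at c is exactly 0 and smaller than values on the left
  have hDc0 : D c = 0 := by
    rcases lt_trichotomy (D c) 0 with h | h | h
    ·
      -- use intermediate value on [0,c]? simpler: sInf with continuity again:
      exfalso
      have hcont : ContinuousAt D c := (pan_D_hasDeriv hq heq hc0).continuousAt
      have : ∀ᶠ t in 𝓝[<] c, 0 < D t := by
        filter_upwards [Ioo_mem_nhdsLT hcpos] with t ht'
        exact hlt t ht'.1.le ht'.2
      have h2 : Tendsto D (𝓝[<] c) (𝓝 (D c)) :=
        hcont.continuousWithinAt.tendsto
      have := ge_of_tendsto h2 (this.mono fun t ht => ht.le)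
      linarith
    · exact h
    · linarith
  -- derivative at c is nonpositive since D ≥ D c on the left
  have hd_nonpos : q * l * (x (q * c) * x (q * (q * c)) -
      q * q * (x c * x (q * (q * (q * c))))) ≤ 0 := by
    apply deriv_nonpos_of_left_min hcpos (pan_D_hasDeriv hq heq hc0)
    intro t ht htc
    show D c ≤ D t
    rw [hDc0]
    exact (hlt t ht.le htc).le
  -- but the derivative at c is positive, contradiction
  have hA : 0 < x (q * c) := hpos _ (by positivity)
  have hB : 0 < x (q * (q * c)) := hpos _ (by positivity)
  have hC3 : 0 < x (q * (q * (q * c))) := hpos _ (by positivity)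
  have hX : 0 < x c := hpos _ hc0
  have hzero : x (q * c) ^ 2 = q * (x c * x (q * (q * c))) := by
    have : D c = 0 := hDc0
    simp only [hD] at this
    linarith
  have hqc : 0 < D (q * c) := hlt _ (by positivity) (by nlinarith)
  have hqc' : q * (x (q * c) * x (q * (q * (q * c)))) < x (q * (q * c)) ^ 2 := by
    simp only [hD] at hqc
    ring_nf at hqc ⊢
    linarith [hqc]
  -- derive positivity of the derivative
  have key : q * q * (x c * x (q * (q * (q * c)))) < x (q * c) * x (q * (q * c)) := by
    nlinarith [mul_lt_mul_of_pos_left hqc' (mul_pos hq hX), sq_nonneg (x (q * c)), hA, hB]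
  nlinarith [key, mul_pos hq hl]

end Pantograph3


set_option maxHeartbeats 1000000 in
/-- The ratio x(t)/x(qt) of the positive pantograph solution is monotone
increasing on (0,∞) and tends to infinity. -/
theorem pantograph_ratio_tendsto
    (q l x₀ : ℝ) (hq : 0 < q) (hq1 : q < 1) (hl : 0 < l) (hx₀ : 0 < x₀)
    (x : ℝ → ℝ) (h0 : x 0 = x₀)
    (heq : ∀ t, 0 ≤ t → HasDerivAt x (l * x (q * t)) t) :
    MonotoneOn (fun t => x t / x (q * t)) (Set.Ioi 0) ∧
      Filter.Tendsto (fun t => x t / x (q * t)) Filter.atTop Filter.atTop := by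
  have hpos := pan_pos hq hq1 hl hx₀ h0 heq
  have hxm : MonotoneOn x (Ici 0) := (pan_mono hq hq1 hl hx₀ h0 heq).monotoneOn
  have hDpos := pan_D_pos hq hq1 hl hx₀ h0 heq
  have hmonoR : StrictMonoOn (fun t => x t / x (q * t)) (Ioi 0) := by
    apply strictMonoOn_of_deriv_pos (convex_Ioi 0)
    · intro s hs
      exact ((heq s (le_of_lt hs)).div (pan_hasDerivAt_scaled hq heq (le_of_lt hs))
        (ne_of_gt (hpos _ (mul_nonneg hq.le (le_of_lt hs))))).continuousAt.continuousWithinAt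
    · intro s hs
      rw [interior_Ioi] at hs
      have hA : 0 < x (q * s) := hpos _ (mul_nonneg hq.le hs.le)
      have hds := (heq s hs.le).div (pan_hasDerivAt_scaled hq heq hs.le) (ne_of_gt hA)
      rw [show (fun t => x t / x (q * t)) = (x / fun s => x (q * s)) from rfl, hds.deriv]
      have hDs := hDpos s hs.le
      apply div_pos
      · nlinarith [mul_pos hl (show (0:ℝ) < x (q * s) ^ 2 - q * (x s * x (q * (q * s))) by
          linarith)]
      · positivity
  refine ⟨hmonoR.monotoneOn, ?_⟩
  rw [Filter.tendsto_atTop]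
  intro b
  have hc1q : 0 < l * (1 - q) := by nlinarith
  filter_upwards [Filter.eventually_ge_atTop (max 1 (b * b / (l * (1 - q))))] with t ht
  have ht1 : (1:ℝ) ≤ t := le_trans (le_max_left _ _) ht
  have ht2 : b * b / (l * (1 - q)) ≤ t := le_trans (le_max_right _ _) ht
  have htpos : 0 < t := lt_of_lt_of_le one_pos ht1
  have hA : 0 < x (q * t) := hpos _ (by positivity)
  have hB : 0 < x (q * (q * t)) := hpos _ (by positivity)
  have hX : 0 < x t := hpos _ htpos.le
  -- mean value inequality on [q t, t]
  have hF1 : l * x (q * (q * t)) * (t - q * t) ≤ x t - x (q * t) := by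
    apply Convex.mul_sub_le_image_sub_of_le_deriv (convex_Icc (q * t) t)
    · intro s hs
      have hs0 : 0 ≤ s := le_trans (by positivity) hs.1
      exact (heq s hs0).continuousAt.continuousWithinAt
    · intro s hs
      rw [interior_Icc] at hs
      have hs0 : 0 ≤ s := le_trans (by positivity) hs.1.le
      exact (heq s hs0).differentiableAt.differentiableWithinAt
    · intro s hs
      rw [interior_Icc] at hs
      have hs0 : 0 ≤ s := le_trans (by positivity) hs.1.le
      rw [(heq s hs0).deriv]
      have : x (q * (q * t)) ≤ x (q * s) := by
        apply hxm (mem_Ici.mpr (by positivity)) (mem_Ici.mpr (by positivity))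
        nlinarith [hs.1]
      nlinarith [this]
    · exact mem_Icc.mpr ⟨le_refl _, by nlinarith⟩
    · exact mem_Icc.mpr ⟨by nlinarith, le_refl _⟩
    · nlinarith
  -- ratio at q t is at most ratio at t
  have hF2 : x (q * t) * x (q * t) ≤ x t * x (q * (q * t)) := by
    have := hmonoR.monotoneOn (mem_Ioi.mpr (by positivity)) (mem_Ioi.mpr htpos)
      (by nlinarith : q * t ≤ t)
    rw [div_le_div_iff₀ hB hA] at this
    linarith [this]
  -- x (q t) ≤ x t
  have hge1 : x (q * t) ≤ x t :=
    hxm (mem_Ici.mpr (by positivity)) (mem_Ici.mpr htpos.le) (by nlinarith)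
  show b ≤ x t / x (q * t)
  by_contra hb
  push_neg at hb
  rw [div_lt_iff₀ hA] at hb
  have hr1 : 1 ≤ x t / x (q * t) := (one_le_div hA).mpr hge1
  have hb1 : 1 < b := lt_of_le_of_lt hr1 (by rw [div_lt_iff₀ hA]; exact hb)
  have hbb : b * b ≤ l * (1 - q) * t := by
    rw [div_le_iff₀ hc1q] at ht2
    linarith [ht2]
  set ct := l * (1 - q) * t with hct
  have hctpos : 0 < ct := by positivity
  have hF1' : x (q * (q * t)) * ct ≤ x t - x (q * t) := by
    rw [hct]; nlinarith [hF1]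
  have h1 : x t * (x (q * (q * t)) * ct) ≤ x t * (x t - x (q * t)) :=
    mul_le_mul_of_nonneg_left hF1' hX.le
  have h2 : x (q * t) * x (q * t) * ct ≤ x t * x (q * (q * t)) * ct :=
    mul_le_mul_of_nonneg_right hF2 hctpos.le
  have h3 : x t * x t < (b * x (q * t)) * (b * x (q * t)) := by nlinarith [hb, hX, hA]
  have h4 : x (q * t) * x (q * t) * (b * b) ≤ x (q * t) * x (q * t) * ct :=
    mul_le_mul_of_nonneg_left hbb (by positivity)
  nlinarith [h1, h2, h3, h4, mul_pos hX hA]
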